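/- Let (x₁, x₂, x₃, x₄) and (y₁, y₂, y₃, y₄) be solutions on ℝ of the ODE system x₁' = x₂, x₂' = 4x₁ + x₃, x₃' = x₄, x₄' = 4x₁x₄, both bounded on ℝ (each component bounded), with x₄ > 0 and y₄ > 0 everywhere, and sharing the same value of the first integral: 2x₂² − 8x₁² − 4x₁x₃ + x₄ = 2y₂² − 8y₁² − 4y₁y₃ + y₄ = c. Then the two solutions agree up to a translation in t: there exists t₀ ∈ ℝ such that yᵢ(t) = xᵢ(t + t₀) for all t ∈ ℝ and i = 1, 2, 3, 4. -/

import Mathlib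

open Filter

open Set Topology Real

structure Sol (x₁ x₂ x₃ x₄ : ℝ → ℝ) (c : ℝ) : Prop where
  d₁ : ∀ t : ℝ, HasDerivAt x₁ (x₂ t) t
  d₂ : ∀ t : ℝ, HasDerivAt x₂ (4 * x₁ t + x₃ t) t
  d₃ : ∀ t : ℝ, HasDerivAt x₃ (x₄ t) t
  d₄ : ∀ t : ℝ, HasDerivAt x₄ (4 * x₁ t * x₄ t) t
  bdd : ∃ M : ℝ, ∀ t : ℝ, |x₁ t| ≤ M ∧ |x₂ t| ≤ M ∧ |x₃ t| ≤ M ∧ |x₄ t| ≤ M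
  pos : ∀ t : ℝ, 0 < x₄ t
  en : ∀ t : ℝ, 2 * (x₂ t) ^ 2 - 8 * (x₁ t) ^ 2 - 4 * x₁ t * x₃ t + x₄ t = c

namespace Sol

variable {x₁ x₂ x₃ x₄ : ℝ → ℝ} {c : ℝ}

lemma reflect (h : Sol x₁ x₂ x₃ x₄ c) :
    Sol (fun t => -x₁ (-t)) (fun t => x₂ (-t)) (fun t => -x₃ (-t)) (fun t => x₄ (-t)) c := by
  have hneg : ∀ t : ℝ, HasDerivAt (fun s : ℝ => -s) (-1 : ℝ) t := fun t => (hasDerivAt_id t).neg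
  refine ⟨?_, ?_, ?_, ?_, ?_, fun t => h.pos (-t), ?_⟩
  · intro t
    have := ((h.d₁ (-t)).comp t (hneg t)).neg
    exact this.congr_deriv (by ring)
  · intro t
    have := (h.d₂ (-t)).comp t (hneg t)
    exact this.congr_deriv (by ring)
  · intro t
    have := ((h.d₃ (-t)).comp t (hneg t)).neg
    exact this.congr_deriv (by ring)
  · intro t
    have := (h.d₄ (-t)).comp t (hneg t)
    exact this.congr_deriv (by ring)
  · obtain ⟨M, hM⟩ := h.bdd
    exact ⟨M, fun t => by simpa [abs_neg] using hM (-t)⟩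
  · intro t
    have := h.en (-t)
    ring_nf
    ring_nf at this
    linarith

/-- derivative of `t ↦ exp (a*t)` -/
lemma expAux (a t : ℝ) : HasDerivAt (fun s : ℝ => Real.exp (a * s)) (a * Real.exp (a * t)) t := by
  have h1 : HasDerivAt (fun s : ℝ => a * s) a t := by
    simpa using (hasDerivAt_id t).const_mul a
  exact h1.exp.congr_deriv (by ring)

lemma psi_neg (h : Sol x₁ x₂ x₃ x₄ c) (t : ℝ) : 4 * x₁ t + x₃ t + 2 * x₂ t < 0 := by
  obtain ⟨M, hM⟩ := h.bdd
  set k : ℝ → ℝ := fun s => Real.exp (-2 * s) * (4 * x₁ s + x₃ s + 2 * x₂ s) with hk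
  have hkd : ∀ s, HasDerivAt k (Real.exp (-2 * s) * x₄ s) s := by
    intro s
    have hψ : HasDerivAt (fun u => 4 * x₁ u + x₃ u + 2 * x₂ u)
        (4 * x₂ s + x₄ s + 2 * (4 * x₁ s + x₃ s)) s :=
      (((h.d₁ s).const_mul 4).add (h.d₃ s)).add ((h.d₂ s).const_mul 2)
    have := (expAux (-2) s).mul hψ
    exact this.congr_deriv (by ring)
  have hmono : StrictMono k := strictMono_of_deriv_pos (fun s => by
    rw [(hkd s).deriv]; exact mul_pos (Real.exp_pos _) (h.pos s))
  have hM0 : 0 ≤ M := le_trans (abs_nonneg _) (hM 0).1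
  have hk0 : Tendsto k atTop (𝓝 0) := by
    have hbound : ∀ s, ‖k s‖ ≤ 7 * M * Real.exp (-2 * s) := by
      intro s
      rw [hk]
      rw [norm_mul, Real.norm_eq_abs, Real.norm_eq_abs, abs_exp]
      rw [mul_comm (7 * M)]
      apply mul_le_mul_of_nonneg_left ?_ (Real.exp_pos _).le
      obtain ⟨h1, h2, h3, _⟩ := hM s
      calc |4 * x₁ s + x₃ s + 2 * x₂ s| ≤ |4 * x₁ s| + |x₃ s| + |2 * x₂ s| := by
            exact (abs_add_le _ _).trans (by gcongr; exact abs_add_le _ _)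
        _ ≤ 4 * M + M + 2 * M := by
            rw [abs_mul, abs_mul]
            gcongr <;> norm_num
        _ ≤ 7 * M := by linarith
    have h1 : Tendsto (fun s : ℝ => -2 * s) atTop atBot :=
      (tendsto_const_mul_atBot_of_neg (by norm_num : (-2:ℝ) < 0)).mpr tendsto_id
    have hexp : Tendsto (fun s : ℝ => 7 * M * Real.exp (-2 * s)) atTop (𝓝 0) := by
      have h2 : Tendsto (fun s : ℝ => Real.exp (-2 * s)) atTop (𝓝 0) :=
        Real.tendsto_exp_atBot.comp h1
      simpa using h2.const_mul (7 * M)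
    exact squeeze_zero_norm hbound hexp
  -- k is increasing with limit 0 at +∞, hence negative
  have hkneg : k t < 0 := by
    have h1 : k t < k (t + 1) := hmono (by linarith)
    have h2 : k (t + 1) ≤ 0 := by
      apply ge_of_tendsto hk0
      filter_upwards [eventually_ge_atTop (t + 1)] with s hs
      exact (hmono.le_iff_le).mpr hs
    linarith
  by_contra hc
  push_neg at hc
  have : (0:ℝ) ≤ Real.exp (-2 * t) * (4 * x₁ t + x₃ t + 2 * x₂ t) :=
    mul_nonneg (Real.exp_pos _).le hc
  have hkt : k t = Real.exp (-2 * t) * (4 * x₁ t + x₃ t + 2 * x₂ t) := rfl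
  linarith [hkt ▸ this]

lemma phi_pos (h : Sol x₁ x₂ x₃ x₄ c) (t : ℝ) : 0 < 4 * x₁ t + x₃ t - 2 * x₂ t := by
  obtain ⟨M, hM⟩ := h.bdd
  set g : ℝ → ℝ := fun s => Real.exp (2 * s) * (4 * x₁ s + x₃ s - 2 * x₂ s) with hg
  have hgd : ∀ s, HasDerivAt g (Real.exp (2 * s) * x₄ s) s := by
    intro s
    have hφ : HasDerivAt (fun u => 4 * x₁ u + x₃ u - 2 * x₂ u)
        (4 * x₂ s + x₄ s - 2 * (4 * x₁ s + x₃ s)) s :=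
      (((h.d₁ s).const_mul 4).add (h.d₃ s)).sub ((h.d₂ s).const_mul 2)
    exact ((expAux 2 s).mul hφ).congr_deriv (by ring)
  have hmono : StrictMono g := strictMono_of_deriv_pos (fun s => by
    rw [(hgd s).deriv]; exact mul_pos (Real.exp_pos _) (h.pos s))
  have hM0 : 0 ≤ M := le_trans (abs_nonneg _) (hM 0).1
  have hg0 : Tendsto g atBot (𝓝 0) := by
    have hbound : ∀ s, ‖g s‖ ≤ 7 * M * Real.exp (2 * s) := by
      intro s
      rw [hg, norm_mul, Real.norm_eq_abs, Real.norm_eq_abs, abs_exp, mul_comm (7 * M)]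
      apply mul_le_mul_of_nonneg_left ?_ (Real.exp_pos _).le
      obtain ⟨h1, h2, h3, _⟩ := hM s
      calc |4 * x₁ s + x₃ s - 2 * x₂ s| ≤ |4 * x₁ s| + |x₃ s| + |2 * x₂ s| := by
            exact (abs_sub _ _).trans (by gcongr; exact abs_add_le _ _)
        _ ≤ 4 * M + M + 2 * M := by
            rw [abs_mul, abs_mul]; gcongr <;> norm_num
        _ ≤ 7 * M := by linarith
    have h1 : Tendsto (fun s : ℝ => 2 * s) atBot atBot :=
      (tendsto_const_mul_atBot_of_pos (by norm_num : (0:ℝ) < 2)).mpr tendsto_id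
    have hexp : Tendsto (fun s : ℝ => 7 * M * Real.exp (2 * s)) atBot (𝓝 0) := by
      have h2 : Tendsto (fun s : ℝ => Real.exp (2 * s)) atBot (𝓝 0) :=
        Real.tendsto_exp_atBot.comp h1
      simpa using h2.const_mul (7 * M)
    exact squeeze_zero_norm hbound hexp
  have hgpos : 0 < g t := by
    have h1 : g (t - 1) < g t := hmono (by linarith)
    have h2 : 0 ≤ g (t - 1) := by
      apply le_of_tendsto hg0
      filter_upwards [eventually_le_atBot (t - 1)] with s hs
      exact (hmono.le_iff_le).mpr hs
    linarith
  by_contra hc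
  push_neg at hc
  have : Real.exp (2 * t) * (4 * x₁ t + x₃ t - 2 * x₂ t) ≤ 0 :=
    mul_nonpos_of_nonneg_of_nonpos (Real.exp_pos _).le hc
  have hgt : g t = Real.exp (2 * t) * (4 * x₁ t + x₃ t - 2 * x₂ t) := rfl
  linarith [hgt ▸ this]

lemma x2_neg (h : Sol x₁ x₂ x₃ x₄ c) (t : ℝ) : x₂ t < 0 := by
  have := h.psi_neg t
  have := h.phi_pos t
  linarith

lemma mvt_unit (f f' : ℝ → ℝ) (hd : ∀ s : ℝ, HasDerivAt f (f' s) s) (t : ℝ) :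
    ∃ z : ℝ, t < z ∧ z < t + 1 ∧ f' z = f (t + 1) - f t := by
  obtain ⟨z, hz, hz'⟩ := exists_hasDerivAt_eq_slope f f' (by linarith : t < t + 1)
    (fun s _ => (hd s).continuousAt.continuousWithinAt) (fun s _ => hd s)
  exact ⟨z, hz.1, hz.2, by rw [hz']; simp⟩

lemma x1_anti (h : Sol x₁ x₂ x₃ x₄ c) : StrictAnti x₁ :=
  strictAnti_of_deriv_neg (fun s => by rw [(h.d₁ s).deriv]; exact h.x2_neg s)

lemma x1_lim (h : Sol x₁ x₂ x₃ x₄ c) :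
    ∃ α : ℝ, Tendsto x₁ atTop (𝓝 α) ∧ ∀ t : ℝ, α < x₁ t := by
  obtain ⟨M, hM⟩ := h.bdd
  have hbdd : BddBelow (Set.range x₁) := by
    refine ⟨-M, ?_⟩
    rintro y ⟨t, rfl⟩
    exact (abs_le.1 (hM t).1).1
  have hten := tendsto_atTop_ciInf h.x1_anti.antitone hbdd
  refine ⟨⨅ t, x₁ t, hten, fun t => ?_⟩
  have h1 : (⨅ t, x₁ t) ≤ x₁ (t + 1) := ciInf_le hbdd (t + 1)
  have h2 : x₁ (t + 1) < x₁ t := h.x1_anti (by linarith)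
  linarith

lemma x2_top (h : Sol x₁ x₂ x₃ x₄ c) : Tendsto x₂ atTop (𝓝 0) := by
  obtain ⟨α, hα, -⟩ := h.x1_lim
  set p : ℝ → ℝ := fun s => Real.exp (2 * s) * x₂ s with hp
  have hpd : ∀ s, HasDerivAt p (Real.exp (2 * s) * (4 * x₁ s + x₃ s + 2 * x₂ s)) s := by
    intro s
    exact ((expAux 2 s).mul (h.d₂ s)).congr_deriv (by ring)
  have hpanti : StrictAnti p := strictAnti_of_deriv_neg (fun s => by
    rw [(hpd s).deriv]
    exact mul_neg_of_pos_of_neg (Real.exp_pos _) (h.psi_neg s))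
  choose ξ hξ1 hξ2 hξ3 using mvt_unit x₁ x₂ h.d₁
  have hbound : ∀ t : ℝ, Real.exp 2 * x₂ (ξ t) ≤ x₂ t := by
    intro t
    have h1 : p (ξ t) < p t := hpanti (hξ1 t)
    have h2 : Real.exp (2 * ξ t - 2 * t) * x₂ (ξ t) < x₂ t := by
      have h3 := mul_lt_mul_of_pos_left h1 (Real.exp_pos (-(2 * t)))
      rw [hp] at h3
      simp only at h3
      calc Real.exp (2 * ξ t - 2 * t) * x₂ (ξ t)
          = Real.exp (-(2 * t)) * (Real.exp (2 * ξ t) * x₂ (ξ t)) := by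
            rw [← mul_assoc, ← Real.exp_add]; ring_nf
        _ < Real.exp (-(2 * t)) * (Real.exp (2 * t) * x₂ t) := h3
        _ = x₂ t := by rw [← mul_assoc, ← Real.exp_add]; simp
    have h4 : Real.exp 2 * x₂ (ξ t) ≤ Real.exp (2 * ξ t - 2 * t) * x₂ (ξ t) := by
      apply mul_le_mul_of_nonpos_right ?_ (h.x2_neg (ξ t)).le
      exact Real.exp_le_exp.mpr (by linarith [hξ2 t])
    linarith
  have hg : Tendsto (fun t : ℝ => Real.exp 2 * x₂ (ξ t)) atTop (𝓝 0) := by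
    have h5 : Tendsto (fun t : ℝ => x₁ (t + 1) - x₁ t) atTop (𝓝 0) := by
      have h6 : Tendsto (fun t : ℝ => x₁ (t + 1)) atTop (𝓝 α) :=
        hα.comp (tendsto_atTop_add_const_right atTop 1 tendsto_id)
      simpa using h6.sub hα
    have h7 : (fun t : ℝ => Real.exp 2 * x₂ (ξ t))
        = fun t : ℝ => Real.exp 2 * (x₁ (t + 1) - x₁ t) := by
      funext t; rw [hξ3 t]
    rw [h7]
    simpa using h5.const_mul (Real.exp 2)
  exact tendsto_of_tendsto_of_tendsto_of_le_of_le hg tendsto_const_nhds hbound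
    (fun t => (h.x2_neg t).le)

lemma x1_alpha (h : Sol x₁ x₂ x₃ x₄ c) :
    ∃ α : ℝ, Tendsto x₁ atTop (𝓝 α) ∧ c = 8 * α ^ 2 ∧ ∀ t : ℝ, α < x₁ t := by
  obtain ⟨α, hα, hαlt⟩ := h.x1_lim
  refine ⟨α, hα, ?_, hαlt⟩
  obtain ⟨M, hM⟩ := h.bdd
  -- x₃ is monotone and bounded, hence converges
  have hx3mono : StrictMono x₃ := strictMono_of_deriv_pos (fun s => by
    rw [(h.d₃ s).deriv]; exact h.pos s)
  have hbdd3 : BddAbove (Set.range x₃) := by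
    refine ⟨M, ?_⟩
    rintro y ⟨t, rfl⟩
    exact (abs_le.1 (hM t).2.2.1).2
  set L : ℝ := ⨆ t, x₃ t with hL
  have hLten : Tendsto x₃ atTop (𝓝 L) := tendsto_atTop_ciSup hx3mono.monotone hbdd3
  have hx2 : Tendsto x₂ atTop (𝓝 0) := h.x2_top
  -- L = -4α  via MVT on x₂
  have hL4 : 4 * α + L = 0 := by
    choose ξ hξ1 hξ2 hξ3 using mvt_unit x₂ (fun s => 4 * x₁ s + x₃ s) h.d₂
    have hξtop : Tendsto ξ atTop atTop :=
      tendsto_atTop_mono (fun t => (hξ1 t).le) tendsto_id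
    have h1 : Tendsto (fun t : ℝ => 4 * x₁ (ξ t) + x₃ (ξ t)) atTop (𝓝 (4 * α + L)) := by
      have := ((hα.const_mul 4).add hLten).comp hξtop
      simpa [Function.comp_def] using this
    have h2 : Tendsto (fun t : ℝ => x₂ (t + 1) - x₂ t) atTop (𝓝 0) := by
      have h6 : Tendsto (fun t : ℝ => x₂ (t + 1)) atTop (𝓝 0) :=
        hx2.comp (tendsto_atTop_add_const_right atTop 1 tendsto_id)
      simpa using h6.sub hx2
    have h3 : (fun t : ℝ => 4 * x₁ (ξ t) + x₃ (ξ t)) = fun t : ℝ => x₂ (t + 1) - x₂ t := by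
      funext t; exact hξ3 t
    rw [h3] at h1
    exact tendsto_nhds_unique h1 h2
  -- x₄ tends to c + 8α² + 4αL, which must be 0, via MVT on x₃
  have hx4ten : Tendsto x₄ atTop (𝓝 (c + 8 * α ^ 2 + 4 * α * L)) := by
    have h1 : x₄ = fun t => c - 2 * (x₂ t) ^ 2 + 8 * (x₁ t) ^ 2 + 4 * x₁ t * x₃ t := by
      funext t; linarith [h.en t]
    rw [h1]
    have h2 : Tendsto (fun t => c - 2 * (x₂ t) ^ 2 + 8 * (x₁ t) ^ 2 + 4 * x₁ t * x₃ t) atTop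
        (𝓝 (c - 2 * 0 ^ 2 + 8 * α ^ 2 + 4 * α * L)) := by
      exact (((tendsto_const_nhds.sub ((hx2.pow 2).const_mul 2)).add
        ((hα.pow 2).const_mul 8)).add (((hα.const_mul 4).mul hLten)))
    convert h2 using 2
    norm_num
  have hm0 : c + 8 * α ^ 2 + 4 * α * L = 0 := by
    choose ξ hξ1 hξ2 hξ3 using mvt_unit x₃ x₄ h.d₃
    have hξtop : Tendsto ξ atTop atTop :=
      tendsto_atTop_mono (fun t => (hξ1 t).le) tendsto_id
    have h1 : Tendsto (fun t : ℝ => x₄ (ξ t)) atTop (𝓝 (c + 8 * α ^ 2 + 4 * α * L)) :=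
      hx4ten.comp hξtop
    have h2 : Tendsto (fun t : ℝ => x₃ (t + 1) - x₃ t) atTop (𝓝 0) := by
      have h6 : Tendsto (fun t : ℝ => x₃ (t + 1)) atTop (𝓝 L) :=
        hLten.comp (tendsto_atTop_add_const_right atTop 1 tendsto_id)
      simpa using h6.sub hLten
    have h3 : (fun t : ℝ => x₄ (ξ t)) = fun t : ℝ => x₃ (t + 1) - x₃ t := by
      funext t; exact hξ3 t
    rw [h3] at h1
    exact tendsto_nhds_unique h1 h2
  -- conclude c = 8α²
  have : L = -(4 * α) := by linarith
  rw [this] at hm0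
  nlinarith [hm0]

lemma interval (h : Sol x₁ x₂ x₃ x₄ c) :
    ∃ a : ℝ, 0 < a ∧ c = 8 * a ^ 2 ∧ Tendsto x₁ atTop (𝓝 (-a)) ∧ Tendsto x₁ atBot (𝓝 a) ∧
      Tendsto x₂ atTop (𝓝 0) ∧ Tendsto x₂ atBot (𝓝 0) ∧ ∀ t : ℝ, -a < x₁ t ∧ x₁ t < a := by
  obtain ⟨α, hα, hcα, hαlt⟩ := h.x1_alpha
  obtain ⟨β, hβ, hcβ, hβlt⟩ := h.reflect.x1_alpha
  -- β is the atTop limit of -x₁(-t); so x₁ → -β at atBot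
  have hneg : Tendsto (fun t : ℝ => -t) atBot atTop := tendsto_neg_atBot_atTop
  have hx1bot : Tendsto x₁ atBot (𝓝 (-β)) := by
    have h1 : Tendsto (fun t : ℝ => -x₁ (-(-t))) atBot (𝓝 β) := hβ.comp hneg
    have h2 : Tendsto (fun t : ℝ => x₁ t) atBot (𝓝 (-β)) := by
      have := h1.neg
      simpa using this
    exact h2
  have hx2bot : Tendsto x₂ atBot (𝓝 0) := by
    have h1 : Tendsto (fun t : ℝ => x₂ (-(-t))) atBot (𝓝 0) := h.reflect.x2_top.comp hneg
    simpa using h1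
  have hβlt' : ∀ t : ℝ, x₁ t < -β := by
    intro t
    have := hβlt (-t)
    simp only [neg_neg] at this
    linarith
  have hαβ : α < -β := lt_trans (hαlt 0) (hβlt' 0)
  have hsq : α ^ 2 = β ^ 2 := by nlinarith
  have ha : α = β := by
    rcases mul_eq_zero.1 (by nlinarith : (α - β) * (α + β) = 0) with h1 | h1
    · linarith
    · exfalso
      have h2 : α = -β := by linarith
      rw [h2] at hαβ
      linarith
  set a : ℝ := -β with haa
  have hapos : 0 < a := by
    have : α < a := hαβ
    rw [ha] at this
    simp only [haa] at this ⊢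
    linarith
  refine ⟨a, hapos, by rw [hcβ, haa]; ring, ?_, hx1bot, h.x2_top, hx2bot, fun t => ⟨?_, hβlt' t⟩⟩
  · have : α = -a := by rw [ha]; simp [haa]
    rwa [this] at hα
  · have : α = -a := by rw [ha]; simp [haa]
    rw [← this]
    exact hαlt t

lemma key {y₁ y₂ y₃ y₄ : ℝ → ℝ} (hx : Sol x₁ x₂ x₃ x₄ c) (hy : Sol y₁ y₂ y₃ y₄ c) :
    ∃ θ : ℝ → ℝ, (∀ t : ℝ, x₁ (θ t) = y₁ t) ∧
      (∀ t : ℝ, HasDerivAt θ ((x₂ (θ t))⁻¹ * y₂ t) t) ∧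
      (∀ t : ℝ, HasDerivAt (fun u => (x₂ (θ u)) ^ 2 - (y₂ u) ^ 2)
        (2 * y₂ t * (x₃ (θ t) - y₃ t)) t) ∧
      (∀ t : ℝ, (x₂ (θ t)) ^ 2 ≤ (y₂ t) ^ 2) := by
  obtain ⟨a, hapos, hca, hx1top, hx1bot, hx2top, hx2bot, hxI⟩ := hx.interval
  obtain ⟨a', ha'pos, hca', hy1top, hy1bot, hy2top, hy2bot, hyI⟩ := hy.interval
  have haa : a' = a := by nlinarith
  rw [haa] at ha'pos hca' hy1top hy1bot hyI
  -- existence of preimages under x₁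
  have hexists : ∀ s : ℝ, -a < s → s < a → ∃ τ : ℝ, x₁ τ = s := by
    intro s h1 h2
    obtain ⟨T, hT⟩ := (hx1top.eventually_lt_const h1).exists
    obtain ⟨T', hT'⟩ := (hx1bot.eventually_const_lt h2).exists
    have hlt : T' < T := by
      by_contra hcon
      push_neg at hcon
      have := hx.x1_anti.antitone hcon
      linarith
    have hmem : s ∈ Icc (x₁ T) (x₁ T') := ⟨hT.le, hT'.le⟩
    have hcont : ContinuousOn x₁ (Icc T' T) :=
      fun u _ => (hx.d₁ u).continuousAt.continuousWithinAt
    obtain ⟨τ, _, hτ⟩ := intermediate_value_Icc' hlt.le hcont hmem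
    exact ⟨τ, hτ⟩
  classical
  set ξ : ℝ → ℝ := fun s => if hs : ∃ τ : ℝ, x₁ τ = s then hs.choose else 0 with hξdef
  have hξ : ∀ s : ℝ, -a < s → s < a → x₁ (ξ s) = s := by
    intro s h1 h2
    have hs := hexists s h1 h2
    simp only [hξdef, dif_pos hs]
    exact hs.choose_spec
  set θ : ℝ → ℝ := fun t => ξ (y₁ t) with hθdef
  have hθ : ∀ t : ℝ, x₁ (θ t) = y₁ t := fun t => hξ _ (hyI t).1 (hyI t).2
  -- continuity of ξ on the open interval
  have hξcont : ∀ s : ℝ, -a < s → s < a → ContinuousAt ξ s := by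
    intro s hs1 hs2
    rw [Metric.continuousAt_iff]
    intro ε hε
    have hx1τ₀ : x₁ (ξ s) = s := hξ s hs1 hs2
    have h1 : x₁ (ξ s) < x₁ (ξ s - ε) := hx.x1_anti (by linarith)
    have h2 : x₁ (ξ s + ε) < x₁ (ξ s) := hx.x1_anti (by linarith)
    refine ⟨min (x₁ (ξ s - ε) - s) (s - x₁ (ξ s + ε)), lt_min (by linarith) (by linarith), ?_⟩
    intro s' hs'
    rw [Real.dist_eq] at hs' ⊢
    have hb1 : x₁ (ξ s + ε) < s' := by
      have := abs_lt.1 (lt_of_lt_of_le hs' (min_le_right _ _))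
      linarith [this.1]
    have hb2 : s' < x₁ (ξ s - ε) := by
      have := abs_lt.1 (lt_of_lt_of_le hs' (min_le_left _ _))
      linarith [this.2]
    have hs'1 : -a < s' := lt_trans (hxI (ξ s + ε)).1 hb1
    have hs'2 : s' < a := lt_trans hb2 (hxI (ξ s - ε)).2
    have hx1s' : x₁ (ξ s') = s' := hξ s' hs'1 hs'2
    have hgt : ξ s - ε < ξ s' := by
      by_contra hcon
      push_neg at hcon
      have := hx.x1_anti.antitone hcon
      rw [hx1s'] at this
      linarith
    have hlt2 : ξ s' < ξ s + ε := by
      by_contra hcon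
      push_neg at hcon
      have := hx.x1_anti.antitone hcon
      rw [hx1s'] at this
      linarith
    rw [abs_lt]
    constructor <;> linarith
  -- derivative of ξ
  have hξd : ∀ s : ℝ, -a < s → s < a → HasDerivAt ξ (x₂ (ξ s))⁻¹ s := by
    intro s h1 h2
    refine HasDerivAt.of_local_left_inverse (hξcont s h1 h2) (hx.d₁ (ξ s))
      (ne_of_lt (hx.x2_neg (ξ s))) ?_
    filter_upwards [Ioo_mem_nhds h1 h2] with s' hs'
    exact hξ s' hs'.1 hs'.2
  have hθd : ∀ t : ℝ, HasDerivAt θ ((x₂ (θ t))⁻¹ * y₂ t) t := by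
    intro t
    exact (hξd (y₁ t) (hyI t).1 (hyI t).2).comp t (hy.d₁ t)
  -- derivative of W
  have hWd : ∀ t : ℝ, HasDerivAt (fun u => (x₂ (θ u)) ^ 2 - (y₂ u) ^ 2)
      (2 * y₂ t * (x₃ (θ t) - y₃ t)) t := by
    intro t
    have hu : HasDerivAt (fun u => x₂ (θ u))
        ((4 * x₁ (θ t) + x₃ (θ t)) * ((x₂ (θ t))⁻¹ * y₂ t)) t :=
      (hx.d₂ (θ t)).comp t (hθd t)
    have hne : x₂ (θ t) ≠ 0 := ne_of_lt (hx.x2_neg (θ t))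
    have e : x₁ (θ t) = y₁ t := hθ t
    refine ((hu.pow 2).sub ((hy.d₂ t).pow 2)).congr_deriv ?_
    rw [e]
    field_simp
    ring
  -- θ escapes to ±∞
  have hθtop : Tendsto θ atTop atTop := by
    rw [tendsto_atTop]
    intro B
    filter_upwards [hy1top.eventually_lt_const (hxI B).1] with t ht
    by_contra hc
    push_neg at hc
    have := hx.x1_anti hc
    rw [hθ t] at this
    linarith
  have hθbot : Tendsto θ atBot atBot := by
    rw [tendsto_atBot]
    intro B
    filter_upwards [hy1bot.eventually_const_lt (hxI B).2] with t ht
    by_contra hc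
    push_neg at hc
    have := hx.x1_anti hc
    rw [hθ t] at this
    linarith
  -- W tends to 0 at ±∞
  have hWtop : Tendsto (fun u => (x₂ (θ u)) ^ 2 - (y₂ u) ^ 2) atTop (𝓝 0) := by
    have h1 : Tendsto (fun u => x₂ (θ u)) atTop (𝓝 0) := hx2top.comp hθtop
    have := (h1.pow 2).sub (hy2top.pow 2)
    simpa using this
  have hWbot : Tendsto (fun u => (x₂ (θ u)) ^ 2 - (y₂ u) ^ 2) atBot (𝓝 0) := by
    have h1 : Tendsto (fun u => x₂ (θ u)) atBot (𝓝 0) := hx2bot.comp hθbot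
    have := (h1.pow 2).sub (hy2bot.pow 2)
    simpa using this
  have hWcont : Continuous (fun u => (x₂ (θ u)) ^ 2 - (y₂ u) ^ 2) := by
    rw [continuous_iff_continuousAt]
    exact fun t => (hWd t).continuousAt
  -- the maximum principle: W ≤ 0
  have hle : ∀ t : ℝ, (x₂ (θ t)) ^ 2 ≤ (y₂ t) ^ 2 := by
    by_contra hcon
    push_neg at hcon
    obtain ⟨ts, hts⟩ := hcon
    have hts' : 0 < (x₂ (θ ts)) ^ 2 - (y₂ ts) ^ 2 := by linarith
    obtain ⟨T₁, hT₁⟩ := eventually_atTop.1 (hWtop.eventually_lt_const hts')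
    obtain ⟨T₂, hT₂⟩ := eventually_atBot.1 (hWbot.eventually_lt_const hts')
    have hmemts : ts ∈ Icc (min T₂ ts) (max T₁ ts) := ⟨min_le_right _ _, le_max_right _ _⟩
    obtain ⟨t₀, ht₀mem, ht₀max⟩ := isCompact_Icc.exists_isMaxOn ⟨ts, hmemts⟩
      hWcont.continuousOn
    have hglob : ∀ u : ℝ, (x₂ (θ u)) ^ 2 - (y₂ u) ^ 2 ≤ (x₂ (θ t₀)) ^ 2 - (y₂ t₀) ^ 2 := by
      intro u
      by_cases hu : u ∈ Icc (min T₂ ts) (max T₁ ts)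
      · exact ht₀max hu
      · have h9 : (x₂ (θ ts)) ^ 2 - (y₂ ts) ^ 2 ≤ (x₂ (θ t₀)) ^ 2 - (y₂ t₀) ^ 2 :=
          ht₀max hmemts
        have h' : (x₂ (θ u)) ^ 2 - (y₂ u) ^ 2 < (x₂ (θ ts)) ^ 2 - (y₂ ts) ^ 2 := by
          simp only [Set.mem_Icc, not_and_or, not_le] at hu
          rcases hu with h' | h'
          · exact hT₂ u (by linarith [min_le_left T₂ ts])
          · exact hT₁ u (by linarith [le_max_left T₁ ts])
        linarith
    have h9 : (x₂ (θ ts)) ^ 2 - (y₂ ts) ^ 2 ≤ (x₂ (θ t₀)) ^ 2 - (y₂ t₀) ^ 2 := ht₀max hmemts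
    have hpos0 : 0 < (x₂ (θ t₀)) ^ 2 - (y₂ t₀) ^ 2 := lt_of_lt_of_le hts' h9
    have hloc : IsLocalMax (fun u => (x₂ (θ u)) ^ 2 - (y₂ u) ^ 2) t₀ :=
      Filter.Eventually.of_forall hglob
    have hD0 : 2 * y₂ t₀ * (x₃ (θ t₀) - y₃ t₀) = 0 := hloc.hasDerivAt_eq_zero (hWd t₀)
    have hy2ne : y₂ t₀ ≠ 0 := ne_of_lt (hy.x2_neg t₀)
    have hpq : x₃ (θ t₀) = y₃ t₀ := by
      have h' : x₃ (θ t₀) - y₃ t₀ = 0 := by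
        rcases mul_eq_zero.1 hD0 with h'' | h''
        · rcases mul_eq_zero.1 h'' with h3 | h3
          · norm_num at h3
          · exact absurd h3 hy2ne
        · exact h''
      linarith
    -- derivative of D at t₀
    have hx3θ : HasDerivAt (fun u => x₃ (θ u)) (x₄ (θ t₀) * ((x₂ (θ t₀))⁻¹ * y₂ t₀)) t₀ :=
      (hx.d₃ (θ t₀)).comp t₀ (hθd t₀)
    have hDd : HasDerivAt (fun u => 2 * y₂ u * (x₃ (θ u) - y₃ u))
        (2 * (4 * y₁ t₀ + y₃ t₀) * (x₃ (θ t₀) - y₃ t₀)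
          + 2 * y₂ t₀ * (x₄ (θ t₀) * ((x₂ (θ t₀))⁻¹ * y₂ t₀) - y₄ t₀)) t₀ := by
      have h5 := ((hy.d₂ t₀).const_mul 2).mul (hx3θ.sub (hy.d₃ t₀))
      exact h5.congr_deriv (by simp only [Pi.sub_apply])
    have hd₀pos : 0 < 2 * (4 * y₁ t₀ + y₃ t₀) * (x₃ (θ t₀) - y₃ t₀)
        + 2 * y₂ t₀ * (x₄ (θ t₀) * ((x₂ (θ t₀))⁻¹ * y₂ t₀) - y₄ t₀) := by
      have h0 : x₃ (θ t₀) - y₃ t₀ = 0 := by rw [hpq]; ring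
      rw [h0, mul_zero, zero_add]
      have hu0 : x₂ (θ t₀) < 0 := hx.x2_neg (θ t₀)
      have hv0 : y₂ t₀ < 0 := hy.x2_neg t₀
      have hr0 : 0 < x₄ (θ t₀) := hx.pos (θ t₀)
      have hρ0 : 0 < y₄ t₀ := hy.pos t₀
      have hex := hx.en (θ t₀)
      have hey := hy.en t₀
      have hx1e : x₁ (θ t₀) = y₁ t₀ := hθ t₀
      rw [hx1e, hpq] at hex
      have hrρ : x₄ (θ t₀) - y₄ t₀ = -2 * ((x₂ (θ t₀)) ^ 2 - (y₂ t₀) ^ 2) := by linarith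
      have huv : x₂ (θ t₀) < y₂ t₀ := by nlinarith
      have h1 : (x₂ (θ t₀))⁻¹ * y₂ t₀ < 1 := by
        have h2 : 1 - (x₂ (θ t₀))⁻¹ * y₂ t₀ = (x₂ (θ t₀))⁻¹ * (x₂ (θ t₀) - y₂ t₀) := by
          rw [mul_sub, inv_mul_cancel₀ (ne_of_lt hu0)]
        have h3 : 0 < (x₂ (θ t₀))⁻¹ * (x₂ (θ t₀) - y₂ t₀) :=
          mul_pos_of_neg_of_neg (inv_lt_zero.2 hu0) (by linarith)
        linarith [h2 ▸ h3]
      have h2 : 0 < (x₂ (θ t₀))⁻¹ * y₂ t₀ :=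
        mul_pos_of_neg_of_neg (inv_lt_zero.2 hu0) hv0
      have h3 : x₄ (θ t₀) * ((x₂ (θ t₀))⁻¹ * y₂ t₀) < x₄ (θ t₀) := by nlinarith
      have h4 : x₄ (θ t₀) < y₄ t₀ := by nlinarith
      apply mul_pos_of_neg_of_neg (by linarith) (by linarith)
    -- D is positive just to the right of t₀, so W increases: contradiction
    have hslope := hasDerivAt_iff_tendsto_slope.1 hDd
    have hev : ∀ᶠ z in 𝓝[>] t₀, 0 < 2 * y₂ z * (x₃ (θ z) - y₃ z) := by
      have h5 : ∀ᶠ z in 𝓝[≠] t₀,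
          0 < slope (fun u => 2 * y₂ u * (x₃ (θ u) - y₃ u)) t₀ z :=
        hslope.eventually (lt_mem_nhds hd₀pos)
      have h6 : 𝓝[>] t₀ ≤ 𝓝[≠] t₀ := nhdsWithin_mono _ (fun z hz => ne_of_gt hz)
      filter_upwards [h6 h5, self_mem_nhdsWithin] with z hz hz'
      rw [slope_def_field, hD0, sub_zero] at hz
      have hzpos : 0 < z - t₀ := sub_pos.2 hz'
      have := mul_pos hz hzpos
      rwa [div_mul_cancel₀ _ (ne_of_gt hzpos)] at this
    obtain ⟨b, hbmem, hbsub⟩ := mem_nhdsGT_iff_exists_Ioo_subset.1 hev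
    rw [Set.mem_Ioi] at hbmem
    have hmono2 : StrictMonoOn (fun u => (x₂ (θ u)) ^ 2 - (y₂ u) ^ 2) (Icc t₀ b) := by
      apply strictMonoOn_of_deriv_pos (convex_Icc _ _) hWcont.continuousOn
      intro z hz
      rw [interior_Icc] at hz
      rw [(hWd z).deriv]
      exact hbsub hz
    have hmid : (t₀ + b) / 2 ∈ Icc t₀ b := ⟨by linarith, by linarith⟩
    have hc2 := hmono2 (left_mem_Icc.2 hbmem.le) hmid (by linarith)
    have := hglob ((t₀ + b) / 2)
    simp only at hc2 this
    linarith
  exact ⟨θ, hθ, hθd, hWd, hle⟩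

end Sol


/-- Uniqueness up to translation: two bounded solutions on `ℝ` of the system
`x₁' = x₂`, `x₂' = 4x₁ + x₃`, `x₃' = x₄`, `x₄' = 4x₁x₄` with `x₄ > 0`, `y₄ > 0` and the
same value `c` of the first integral `2x₂² − 8x₁² − 4x₁x₃ + x₄` agree up to a
translation in `t`. -/
theorem bounded_solution_unique_up_to_translation
    (x₁ x₂ x₃ x₄ y₁ y₂ y₃ y₄ : ℝ → ℝ) (c : ℝ)
    (hx₁ : ∀ t : ℝ, HasDerivAt x₁ (x₂ t) t)
    (hx₂ : ∀ t : ℝ, HasDerivAt x₂ (4 * x₁ t + x₃ t) t)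
    (hx₃ : ∀ t : ℝ, HasDerivAt x₃ (x₄ t) t)
    (hx₄ : ∀ t : ℝ, HasDerivAt x₄ (4 * x₁ t * x₄ t) t)
    (hy₁ : ∀ t : ℝ, HasDerivAt y₁ (y₂ t) t)
    (hy₂ : ∀ t : ℝ, HasDerivAt y₂ (4 * y₁ t + y₃ t) t)
    (hy₃ : ∀ t : ℝ, HasDerivAt y₃ (y₄ t) t)
    (hy₄ : ∀ t : ℝ, HasDerivAt y₄ (4 * y₁ t * y₄ t) t)
    (hxbdd : ∃ M : ℝ, ∀ t : ℝ, |x₁ t| ≤ M ∧ |x₂ t| ≤ M ∧ |x₃ t| ≤ M ∧ |x₄ t| ≤ M)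
    (hybdd : ∃ M : ℝ, ∀ t : ℝ, |y₁ t| ≤ M ∧ |y₂ t| ≤ M ∧ |y₃ t| ≤ M ∧ |y₄ t| ≤ M)
    (hx₄pos : ∀ t : ℝ, 0 < x₄ t) (hy₄pos : ∀ t : ℝ, 0 < y₄ t)
    (hcx : ∀ t : ℝ, 2 * (x₂ t) ^ 2 - 8 * (x₁ t) ^ 2 - 4 * x₁ t * x₃ t + x₄ t = c)
    (hcy : ∀ t : ℝ, 2 * (y₂ t) ^ 2 - 8 * (y₁ t) ^ 2 - 4 * y₁ t * y₃ t + y₄ t = c) :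
    ∃ t₀ : ℝ, ∀ t : ℝ,
      y₁ t = x₁ (t + t₀) ∧ y₂ t = x₂ (t + t₀) ∧ y₃ t = x₃ (t + t₀) ∧ y₄ t = x₄ (t + t₀) := by
  have hx : Sol x₁ x₂ x₃ x₄ c := ⟨hx₁, hx₂, hx₃, hx₄, hxbdd, hx₄pos, hcx⟩
  have hy : Sol y₁ y₂ y₃ y₄ c := ⟨hy₁, hy₂, hy₃, hy₄, hybdd, hy₄pos, hcy⟩
  obtain ⟨θ, hθ, hθd, hWd, hle⟩ := hx.key hy
  obtain ⟨η, hη, hηd, hWd', hle'⟩ := hy.key hx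
  have hηθ : ∀ t : ℝ, η (θ t) = t := by
    intro t
    apply hy.x1_anti.injective
    rw [hη (θ t), hθ t]
  have heq : ∀ t : ℝ, x₂ (θ t) = y₂ t := by
    intro t
    have h1 := hle t
    have h2 := hle' (θ t)
    rw [hηθ t] at h2
    have h4 : x₂ (θ t) < 0 := hx.x2_neg (θ t)
    have h5 : y₂ t < 0 := hy.x2_neg t
    nlinarith
  have hθd1 : ∀ t : ℝ, HasDerivAt θ 1 t := by
    intro t
    have h1 := hθd t
    rw [heq t, inv_mul_cancel₀ (ne_of_lt (hy.x2_neg t))] at h1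
    exact h1
  have hθt : ∀ t : ℝ, θ t = t + θ 0 := by
    have hdiff : Differentiable ℝ (fun u => θ u - u) := fun u => by
      have h8 : HasDerivAt (fun v => θ v - v) 0 u := by
        exact ((hθd1 u).sub (hasDerivAt_id' u)).congr_deriv (by ring)
      exact h8.differentiableAt
    have hderiv : ∀ u : ℝ, deriv (fun u => θ u - u) u = 0 := fun u => by
      have h8 : HasDerivAt (fun v => θ v - v) 0 u := by
        exact ((hθd1 u).sub (hasDerivAt_id' u)).congr_deriv (by ring)
      rw [h8.deriv]
    intro t
    have h1 := is_const_of_deriv_eq_zero hdiff hderiv t 0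
    linarith
  have h3eq : ∀ t : ℝ, x₃ (θ t) = y₃ t := by
    intro t
    have hW0 : (fun u => (x₂ (θ u)) ^ 2 - (y₂ u) ^ 2) = fun _ => (0:ℝ) :=
      funext fun u => by rw [heq u]; ring
    have h1 := hWd t
    rw [hW0] at h1
    have h2 : (2:ℝ) * y₂ t * (x₃ (θ t) - y₃ t) = 0 := h1.unique (hasDerivAt_const t 0)
    have h5 : y₂ t ≠ 0 := ne_of_lt (hy.x2_neg t)
    rcases mul_eq_zero.1 h2 with h6 | h6
    · rcases mul_eq_zero.1 h6 with h7 | h7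
      · norm_num at h7
      · exact absurd h7 h5
    · linarith
  have h4eq : ∀ t : ℝ, x₄ (θ t) = y₄ t := by
    intro t
    have hex := hcx (θ t)
    have hey := hcy t
    rw [hθ t, heq t, h3eq t] at hex
    linarith
  refine ⟨θ 0, fun t => ⟨?_, ?_, ?_, ?_⟩⟩
  · rw [← hθt t]; exact (hθ t).symm
  · rw [← hθt t]; exact (heq t).symm
  · rw [← hθt t]; exact (h3eq t).symm
  · rw [← hθt t]; exact (h4eq t).symm
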